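/- arXiv:1706.05703 — 2 statements merged into one kernel-verified Lean document; each statement's English description precedes it below -/
import Mathlib

section
/- Let a be a nonzero real number, σ a real number, and T a real number. Define B(t,T) = (1/a)·(exp(a·(T−t)) − 1), A(t,T) = (σ²/(4a²))·(a·B(t,T)² − 2·B(t,T) + 2·(T−t)), and F(t,r) = exp(A(t,T) − B(t,T)·r) for t ∈ ℝ and r ∈ ℝ. Then F(T,r) = 1 for all r, and F satisfies the term structure partial differential equation ∂_t F(t,r) + a·r·∂_r F(t,r) + (σ²/2)·∂²_{rr} F(t,r) − r·F(t,r) = 0 for all t and r. -/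
/-- The affine term structure candidate `F(t,r) = exp(A(t,T) − B(t,T)·r)`, with
`B(t,T) = (1/a)·(e^{a(T−t)} − 1)` and
`A(t,T) = (σ²/(4a²))·(a·B(t,T)² − 2·B(t,T) + 2(T−t))`, satisfies the terminal
condition `F(T,r) = 1` and the no-arbitrage term structure PDE
`∂ₜF + a·r·∂ᵣF + (σ²/2)·∂ᵣᵣF − r·F = 0`. -/
theorem carma_affine_term_structure_pde (a σ T : ℝ) (ha : a ≠ 0)
    (B A : ℝ → ℝ) (F : ℝ → ℝ → ℝ)
    (hB : ∀ t, B t = (1 / a) * (Real.exp (a * (T - t)) - 1))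
    (hA : ∀ t, A t = (σ ^ 2 / (4 * a ^ 2)) * (a * (B t) ^ 2 - 2 * B t + 2 * (T - t)))
    (hF : ∀ t r, F t r = Real.exp (A t - B t * r)) :
    (∀ r : ℝ, F T r = 1) ∧
    ∀ t r : ℝ,
      deriv (fun t' => F t' r) t + a * r * deriv (fun r' => F t r') r
        + (σ ^ 2 / 2) * deriv (deriv (fun r' => F t r')) r - r * F t r = 0 := by
  constructor
  · intro r
    have hBT : B T = 0 := by simp [hB]
    have hAT : A T = 0 := by simp [hA, hBT]
    simp [hF, hBT, hAT]
  · intro t r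
    set c : ℝ := σ ^ 2 / (4 * a ^ 2) with hc
    set E : ℝ := Real.exp (a * (T - t)) with hE
    set Bv : ℝ := (1 / a) * (E - 1) with hBv
    set Av : ℝ := c * (a * Bv ^ 2 - 2 * Bv + 2 * (T - t)) with hAv
    -- derivative of B
    have hBt : HasDerivAt (fun t' => (1 / a) * (Real.exp (a * (T - t')) - 1)) (-E) t := by
      have h1 : HasDerivAt (fun t' : ℝ => a * (T - t')) (-a) t := by
        simpa using ((hasDerivAt_id t).const_sub T).const_mul a
      have h2 := (h1.exp.sub_const 1).const_mul (1 / a)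
      refine h2.congr_deriv ?_
      rw [hE]; field_simp
    have hTt : HasDerivAt (fun t' : ℝ => 2 * (T - t')) (-2) t := by
      simpa using ((hasDerivAt_id t).const_sub T).const_mul 2
    -- derivative of A
    have hAt : HasDerivAt
        (fun t' => c * (a * ((1 / a) * (Real.exp (a * (T - t')) - 1)) ^ 2
          - 2 * ((1 / a) * (Real.exp (a * (T - t')) - 1)) + 2 * (T - t')))
        (c * (a * (2 * Bv * (-E)) - 2 * (-E) + (-2))) t := by
      have := ((((hBt.pow 2).const_mul a).sub (hBt.const_mul 2)).add hTt).const_mul c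
      refine this.congr_deriv ?_
      ring
    -- derivative of F in t
    have hFt : HasDerivAt (fun t' => F t' r)
        (Real.exp (Av - Bv * r) * (c * (a * (2 * Bv * (-E)) - 2 * (-E) + (-2)) - (-E) * r)) t := by
      have h := (hAt.sub (hBt.mul_const r)).exp
      have hfun : (fun t' => F t' r) = fun t' =>
          Real.exp (c * (a * ((1 / a) * (Real.exp (a * (T - t')) - 1)) ^ 2
            - 2 * ((1 / a) * (Real.exp (a * (T - t')) - 1)) + 2 * (T - t'))
            - (1 / a) * (Real.exp (a * (T - t')) - 1) * r) := by
        funext t'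
        rw [hF, hA, hB]
      rw [hfun]
      exact h
    -- derivative of F in r (first)
    have hFr1 : ∀ x : ℝ, HasDerivAt (fun r' => F t r') (-Bv * Real.exp (Av - Bv * x)) x := by
      intro x
      have h1 : HasDerivAt (fun r' : ℝ => Av - Bv * r') (-Bv) x := by
        simpa using ((hasDerivAt_id x).const_mul Bv).const_sub Av
      have h2 := h1.exp
      have hfun : (fun r' => F t r') = fun r' => Real.exp (Av - Bv * r') := by
        funext r'
        rw [hF, hA, hB]
      rw [hfun]
      convert h2 using 1
      ring
    have hderiv1 : deriv (fun r' => F t r') = fun x => -Bv * Real.exp (Av - Bv * x) := by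
      funext x
      exact (hFr1 x).deriv
    -- second derivative of F in r
    have hFr2 : HasDerivAt (fun x => -Bv * Real.exp (Av - Bv * x))
        (Bv ^ 2 * Real.exp (Av - Bv * r)) r := by
      have h1 : HasDerivAt (fun r' : ℝ => Av - Bv * r') (-Bv) r := by
        simpa using ((hasDerivAt_id r).const_mul Bv).const_sub Av
      have h2 := h1.exp.const_mul (-Bv)
      refine h2.congr_deriv ?_
      ring
    rw [hFt.deriv, hderiv1, hFr2.deriv, hF, hA, hB, ← hE, ← hBv, ← hAv]
    beta_reduce
    have hEB : E = a * Bv + 1 := by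
      rw [hBv]; field_simp
      ring
    rw [hc, hEB]
    field_simp
    ring
end

section
/- Let p ≥ 1, let a₁, …, a_p be complex numbers, and let A be the p×p companion-form matrix whose i-th row (1 ≤ i ≤ p−1) is the (i+1)-st standard basis row vector and whose last row is (−a_p, …, −a₁). Let a(z) = z^p + a₁ z^{p−1} + ⋯ + a_p, let λ₁, …, λ_p be the roots of a(z), assumed pairwise distinct, and let b(z) = b₀ + b₁ z + ⋯ + b_{p−1} z^{p−1} with complex coefficients. Let e = (0, …, 0, 1)ᵀ and b = (b₀, b₁, …, b_{p−1})ᵀ. Then for every u ∈ ℝ, bᵀ·exp(A·u)·e = Σ_{i=1}^{p} (b(λ_i)/a′(λ_i))·exp(λ_i·u), where a′ is the derivative of a and exp(A·u) is the matrix exponential. -/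
open Polynomial Matrix NormedSpace

/-- If `v` is an eigenvector of `M` with eigenvalue `μ`, then it is an eigenvector of
`exp ℂ M` with eigenvalue `Complex.exp μ`. -/
lemma exp_mulVec_eigen {p : ℕ} (M : Matrix (Fin p) (Fin p) ℂ) (v : Fin p → ℂ) (μ : ℂ)
    (h : M.mulVec v = μ • v) :
    (exp M).mulVec v = Complex.exp μ • v := by
  letI : SeminormedRing (Matrix (Fin p) (Fin p) ℂ) := Matrix.linftyOpSemiNormedRing
  letI : NormedRing (Matrix (Fin p) (Fin p) ℂ) := Matrix.linftyOpNormedRing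
  letI : NormedAlgebra ℂ (Matrix (Fin p) (Fin p) ℂ) := Matrix.linftyOpNormedAlgebra
  have hpow : ∀ n : ℕ, (M ^ n).mulVec v = (μ ^ n) • v := by
    intro n
    induction n with
    | zero => simp
    | succ n ih =>
      rw [pow_succ', ← Matrix.mulVec_mulVec, ih, Matrix.mulVec_smul, h, smul_smul, ← pow_succ]
  let L : Matrix (Fin p) (Fin p) ℂ →ₗ[ℂ] (Fin p → ℂ) :=
    { toFun := fun N => N.mulVec v
      map_add' := fun N₁ N₂ => Matrix.add_mulVec N₁ N₂ v
      map_smul' := fun c N => Matrix.smul_mulVec c N v }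
  have hL : Continuous L := L.continuous_of_finiteDimensional
  have hsum : Summable (fun n : ℕ => ((n.factorial : ℂ))⁻¹ • M ^ n) := expSeries_summable' M
  have hmap : L (∑' n : ℕ, ((n.factorial : ℂ))⁻¹ • M ^ n)
      = ∑' n : ℕ, L (((n.factorial : ℂ))⁻¹ • M ^ n) := ((hsum.hasSum.map L hL).tsum_eq).symm
  have hLval : ∀ n : ℕ, L (((n.factorial : ℂ))⁻¹ • M ^ n) = (((n.factorial : ℂ))⁻¹ * μ ^ n) • v := by
    intro n
    have : L (((n.factorial : ℂ))⁻¹ • M ^ n) = ((n.factorial : ℂ))⁻¹ • L (M ^ n) := L.map_smul _ _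
    rw [this]
    show ((n.factorial : ℂ))⁻¹ • (M ^ n).mulVec v = _
    rw [hpow, smul_smul]
  have hμsum : Summable (fun n : ℕ => ((n.factorial : ℂ))⁻¹ * μ ^ n) := by
    simpa [smul_eq_mul] using expSeries_summable' (𝕂 := ℂ) μ
  calc (exp M).mulVec v = L (∑' n : ℕ, ((n.factorial : ℂ))⁻¹ • M ^ n) := by
        rw [exp_eq_tsum (𝕂 := ℂ)]; rfl
    _ = ∑' n : ℕ, L (((n.factorial : ℂ))⁻¹ • M ^ n) := hmap
    _ = ∑' n : ℕ, (((n.factorial : ℂ))⁻¹ * μ ^ n) • v := by simp_rw [hLval]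
    _ = (∑' n : ℕ, ((n.factorial : ℂ))⁻¹ * μ ^ n) • v := hμsum.tsum_smul_const v
    _ = Complex.exp μ • v := by
        rw [Complex.exp_eq_exp_ℂ, exp_eq_tsum (𝕂 := ℂ)]
        simp [smul_eq_mul]

/-- The Lagrange-interpolation coefficient identity. -/
lemma lag_coeff {p : ℕ} (lam : Fin p → ℂ) (hdist : Function.Injective lam) (j : Fin p) :
    ∑ i : Fin p, (∏ k ∈ Finset.univ.erase i, (lam i - lam k))⁻¹ * lam i ^ (j : ℕ)
      = if (j : ℕ) = p - 1 then 1 else 0 := by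
  classical
  have hp : 1 ≤ p := j.pos
  set d : Fin p → ℂ := fun i => ∏ k ∈ Finset.univ.erase i, (lam i - lam k) with hd
  have hdne : ∀ i, d i ≠ 0 := by
    intro i
    refine Finset.prod_ne_zero_iff.mpr fun k hk => ?_
    have : i ≠ k := fun h => (Finset.mem_erase.mp hk).1 h.symm
    exact sub_ne_zero.mpr fun h => this (hdist h)
  set Q : ℂ[X] := ∑ i : Fin p, C ((d i)⁻¹ * lam i ^ (j : ℕ)) *
      Lagrange.nodal (Finset.univ.erase i) lam with hQ
  have hcard : (Finset.univ : Finset (Fin p)).card = p := by simp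
  have hcarde : ∀ i : Fin p, (Finset.univ.erase i).card = p - 1 := by
    intro i; rw [Finset.card_erase_of_mem (Finset.mem_univ i), hcard]
  have hQeq : Q = X ^ (j : ℕ) := by
    refine Polynomial.eq_of_degrees_lt_of_eval_index_eq (v := lam) Finset.univ
      (Function.Injective.injOn hdist) ?_ ?_ ?_
    · refine lt_of_le_of_lt (degree_sum_le _ _) ?_
      rw [Finset.sup_lt_iff (by rw [hcard]; exact WithBot.bot_lt_coe p)]
      intro i _
      refine lt_of_le_of_lt (degree_mul_le _ _) ?_
      have h1 : degree (C ((d i)⁻¹ * lam i ^ (j : ℕ))) ≤ 0 := degree_C_le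
      have h2 : degree (Lagrange.nodal (Finset.univ.erase i) lam) = ((p - 1 : ℕ) : WithBot ℕ) := by
        rw [Lagrange.degree_nodal, hcarde]
      rw [h2]
      calc degree (C ((d i)⁻¹ * lam i ^ (j : ℕ))) + ((p - 1 : ℕ) : WithBot ℕ)
          ≤ 0 + ((p - 1 : ℕ) : WithBot ℕ) := add_le_add_left h1 _
        _ = ((p - 1 : ℕ) : WithBot ℕ) := zero_add _
        _ < ((Finset.univ.card : ℕ) : WithBot ℕ) := by
            rw [hcard]; exact_mod_cast (by omega : p - 1 < p)
    · rw [degree_X_pow, hcard]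
      exact_mod_cast Nat.cast_lt.mpr j.isLt
    · intro m _
      rw [hQ, eval_finset_sum]
      rw [Finset.sum_eq_single m]
      · rw [eval_mul, eval_C]
        have : eval (lam m) (Lagrange.nodal (Finset.univ.erase m) lam) = d m := by
          rw [Lagrange.eval_nodal, hd]
        rw [this, eval_pow, eval_X, mul_comm ((d m)⁻¹) (lam m ^ (j : ℕ)), mul_assoc,
          inv_mul_cancel₀ (hdne m), mul_one]
      · intro i _ hne
        rw [eval_mul,
          Lagrange.eval_nodal_at_node (Finset.mem_erase.mpr ⟨hne.symm, Finset.mem_univ m⟩),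
          mul_zero]
      · intro h; exact absurd (Finset.mem_univ m) h
  have hcoeff : Q.coeff (p - 1) = ∑ i : Fin p, (d i)⁻¹ * lam i ^ (j : ℕ) := by
    rw [hQ, finset_sum_coeff]
    refine Finset.sum_congr rfl fun i _ => ?_
    rw [coeff_C_mul]
    have hmonic : (Lagrange.nodal (Finset.univ.erase i) lam).Monic := Lagrange.nodal_monic
    have hnd : (Lagrange.nodal (Finset.univ.erase i) lam).natDegree = p - 1 := by
      rw [Lagrange.natDegree_nodal, hcarde]
    rw [show (p - 1) = (Lagrange.nodal (Finset.univ.erase i) lam).natDegree from hnd.symm,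
      hmonic.coeff_natDegree, mul_one]
  rw [← hcoeff, hQeq, coeff_X_pow]
  simp [eq_comm]

/-- Partial-fraction expansion of the CARMA kernel: if the companion-form state
matrix `A` has autoregressive polynomial `a(z) = z^p + a₁ z^{p−1} + ⋯ + a_p`
whose roots `λ₁, …, λ_p` are pairwise distinct, then for every `u ∈ ℝ`,
`bᵀ·exp(A·u)·e = Σᵢ (b(λᵢ)/a′(λᵢ))·e^{λᵢ u}`, where
`b(z) = b₀ + b₁ z + ⋯ + b_{p−1} z^{p−1}` and `e = (0, …, 0, 1)ᵀ`.
Here `a i` denotes `a_{i+1}` and `b i` denotes `b_i`. -/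
theorem carma_kernel_partial_fraction (p : ℕ) (hp : 1 ≤ p)
    (a b : Fin p → ℂ) (lam : Fin p → ℂ)
    (A : Matrix (Fin p) (Fin p) ℂ)
    (hA : ∀ i j : Fin p,
      A i j = if (i : ℕ) = p - 1 then -a ⟨p - 1 - (j : ℕ), by have := j.isLt; omega⟩
              else if (j : ℕ) = (i : ℕ) + 1 then 1 else 0)
    (apoly : ℂ[X]) (hapoly : apoly = X ^ p + ∑ k : Fin p, C (a k) * X ^ (p - 1 - (k : ℕ)))
    (bpoly : ℂ[X]) (hbpoly : bpoly = ∑ k : Fin p, C (b k) * X ^ (k : ℕ))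
    (hroots : apoly = ∏ i : Fin p, (X - C (lam i)))
    (hdist : Function.Injective lam)
    (e : Fin p → ℂ) (he : ∀ j : Fin p, e j = if (j : ℕ) = p - 1 then 1 else 0) :
    ∀ u : ℝ,
      b ⬝ᵥ (exp ((u : ℂ) • A)).mulVec e =
        ∑ i : Fin p,
          (bpoly.eval (lam i) / (derivative apoly).eval (lam i)) *
            Complex.exp (lam i * u) := by
  classical
  intro u
  set d : Fin p → ℂ := fun i => ∏ k ∈ Finset.univ.erase i, (lam i - lam k) with hd
  set v : Fin p → Fin p → ℂ := fun i => fun j => lam i ^ (j : ℕ) with hv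
  -- roots of apoly
  have hroot0 : ∀ i : Fin p, apoly.eval (lam i) = 0 := by
    intro i
    rw [hroots, eval_prod]
    exact Finset.prod_eq_zero (Finset.mem_univ i) (by simp)
  -- derivative at each root
  have hderiv : ∀ i : Fin p, (derivative apoly).eval (lam i) = d i := by
    intro i
    have hnodal : apoly = Lagrange.nodal Finset.univ lam := by
      rw [hroots, Lagrange.nodal]
    rw [hnodal, Lagrange.eval_nodal_derivative_eval_node_eq (Finset.mem_univ i),
      Lagrange.eval_nodal, hd]
  -- eigenvectors
  have heig : ∀ i : Fin p, A.mulVec (v i) = lam i • v i := by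
    intro i
    funext r
    have hmv : A.mulVec (v i) r = ∑ j : Fin p, A r j * lam i ^ (j : ℕ) := by
      simp [Matrix.mulVec, dotProduct, hv]
    by_cases hr : (r : ℕ) = p - 1
    · -- last row
      have h0 := hroot0 i
      rw [hapoly] at h0
      rw [eval_add, eval_pow, eval_X, eval_finset_sum] at h0
      simp only [eval_mul, eval_C, eval_pow, eval_X] at h0
      -- reindex the sum
      have hre : ∑ j : Fin p, a ⟨p - 1 - (j : ℕ), by have := j.isLt; omega⟩ * lam i ^ (j : ℕ)
          = ∑ k : Fin p, a k * lam i ^ (p - 1 - (k : ℕ)) := by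
        refine Fintype.sum_bijective Fin.rev Fin.rev_bijective _ _ fun k => ?_
        have h1 : ((Fin.rev k : Fin p) : ℕ) = p - 1 - (k : ℕ) := by
          rw [Fin.val_rev]; omega
        congr 1
        · congr 1
          apply Fin.ext
          show p - 1 - ((k : ℕ)) = ((Fin.rev k : Fin p) : ℕ)
          omega
        · rw [h1]
          congr 1
          have := k.isLt; omega
      have hlp : lam i ^ p = -∑ j : Fin p, a ⟨p - 1 - (j : ℕ), by have := j.isLt; omega⟩ *
          lam i ^ (j : ℕ) := by
        rw [hre]; linear_combination h0
      rw [hmv]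
      have : ∀ j : Fin p, A r j * lam i ^ (j : ℕ) =
          -(a ⟨p - 1 - (j : ℕ), by have := j.isLt; omega⟩ * lam i ^ (j : ℕ)) := by
        intro j; rw [hA r j, if_pos hr]; ring
      rw [Finset.sum_congr rfl fun j _ => this j, Finset.sum_neg_distrib, ← hlp]
      show lam i ^ p = lam i * lam i ^ (r : ℕ)
      rw [hr, ← pow_succ']
      congr 1
      omega
    · -- other rows
      have hr1 : (r : ℕ) + 1 < p := by have := r.isLt; omega
      rw [hmv]
      rw [Finset.sum_eq_single (⟨(r : ℕ) + 1, hr1⟩ : Fin p)]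
      · rw [hA, if_neg hr, if_pos rfl, one_mul]
        show lam i ^ ((r : ℕ) + 1) = lam i * lam i ^ (r : ℕ)
        rw [← pow_succ']
      · intro j _ hne
        rw [hA, if_neg hr, if_neg, zero_mul]
        intro hj
        exact hne (Fin.ext hj)
      · intro h; exact absurd (Finset.mem_univ _) h
  -- eigenvectors of the exponential
  have hexp : ∀ i : Fin p, (exp ((u : ℂ) • A)).mulVec (v i)
      = Complex.exp ((u : ℂ) * lam i) • v i := by
    intro i
    refine exp_mulVec_eigen _ _ _ ?_
    rw [Matrix.smul_mulVec, heig, smul_smul]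
  -- decomposition of e
  have hdne : ∀ i, d i ≠ 0 := by
    intro i
    refine Finset.prod_ne_zero_iff.mpr fun k hk => ?_
    have : i ≠ k := fun h => (Finset.mem_erase.mp hk).1 h.symm
    exact sub_ne_zero.mpr fun h => this (hdist h)
  have hdecomp : e = ∑ i : Fin p, (d i)⁻¹ • v i := by
    funext j
    rw [he j, ← lag_coeff lam hdist j]
    simp [hv, hd]
  -- b ⬝ᵥ v i
  have hbv : ∀ i : Fin p, b ⬝ᵥ v i = bpoly.eval (lam i) := by
    intro i
    rw [hbpoly, eval_finset_sum]
    simp [dotProduct, hv]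
  -- assemble
  rw [hdecomp]
  have hlin : (exp ((u : ℂ) • A)).mulVec (∑ i : Fin p, (d i)⁻¹ • v i)
      = ∑ i : Fin p, (d i)⁻¹ • (exp ((u : ℂ) • A)).mulVec (v i) := by
    rw [show (exp ((u : ℂ) • A)).mulVec = (exp ((u : ℂ) • A)).mulVecLin from rfl,
      map_sum]
    exact Finset.sum_congr rfl fun i _ => by rw [_root_.map_smul]
  rw [hlin]
  have hds : ∀ (w : Fin p → Fin p → ℂ), b ⬝ᵥ (∑ i : Fin p, w i) = ∑ i : Fin p, b ⬝ᵥ w i := by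
    intro w
    simp only [dotProduct, Finset.sum_apply, Finset.mul_sum]
    exact Finset.sum_comm
  rw [hds]
  refine Finset.sum_congr rfl fun i _ => ?_
  rw [hexp i, dotProduct_smul, dotProduct_smul, hbv i, hderiv i]
  rw [mul_comm (lam i) (u : ℂ)]
  field_simp [hdne i]
  rw [smul_eq_mul, smul_eq_mul, ← mul_assoc, mul_one_div_cancel (hdne i), one_mul, mul_comm]
end
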